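/- Symmetric embedding. Let M be a nonempty compact smooth manifold without boundary, and let σ : M → M be a smooth map satisfying σ ∘ σ = id_M and σ(x) ≠ x for all x ∈ M (a smooth free involution). Then there exist an integer N ≥ 1 and a smooth map u : M → ℝ^N such that u is injective, u is an immersion (the differential of u at every point of M is an injective linear map from the tangent space to ℝ^N), and u(σ(x)) = −u(x) for all x ∈ M. -/

import Mathlib

open scoped Manifold
open Function

noncomputable section Aux

private abbrev Esp (n : ℕ) : Type := EuclideanSpace ℝ (Fin n)

/-- The outer-product-like bilinear map `b (x, y) z = ⟪x, z⟫ • y`. -/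
private def outerFun (n : ℕ) : (Esp n × Esp n) → (Esp n →L[ℝ] Esp n) :=
  fun p => (innerSL ℝ p.1).smulRight p.2

private lemma outerFun_apply {n : ℕ} (p : Esp n × Esp n) (z : Esp n) :
    outerFun n p z = (inner ℝ p.1 z : ℝ) • p.2 := rfl

private lemma isBoundedBilinearMap_outerFun {n : ℕ} :
    IsBoundedBilinearMap ℝ (outerFun n) where
  add_left x₁ x₂ y := by
    refine ContinuousLinearMap.ext fun z => ?_
    show (inner ℝ (x₁ + x₂) z : ℝ) • y
      = (inner ℝ x₁ z : ℝ) • y + (inner ℝ x₂ z : ℝ) • y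
    rw [inner_add_left, add_smul]
  smul_left c x y := by
    refine ContinuousLinearMap.ext fun z => ?_
    show (inner ℝ (c • x) z : ℝ) • y = c • ((inner ℝ x z : ℝ) • y)
    rw [real_inner_smul_left, mul_smul]
  add_right x y₁ y₂ := by
    refine ContinuousLinearMap.ext fun z => ?_
    show (inner ℝ x z : ℝ) • (y₁ + y₂) = (inner ℝ x z : ℝ) • y₁ + (inner ℝ x z : ℝ) • y₂
    exact smul_add _ _ _
  smul_right c x y := by
    refine ContinuousLinearMap.ext fun z => ?_
    show (inner ℝ x z : ℝ) • (c • y) = c • ((inner ℝ x z : ℝ) • y)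
    exact smul_comm _ _ _
  bound := by
    refine ⟨1, one_pos, fun x y => ?_⟩
    refine ContinuousLinearMap.opNorm_le_bound _
      (by positivity) fun z => ?_
    rw [outerFun_apply, norm_smul]
    calc ‖(inner ℝ x z : ℝ)‖ * ‖y‖ ≤ ‖x‖ * ‖z‖ * ‖y‖ := by
          gcongr; exact norm_inner_le_norm x z
      _ = 1 * ‖x‖ * ‖y‖ * ‖z‖ := by ring

/-- Key algebraic lemma: if `⟪v,z⟫ • w + ⟪w,z⟫ • v = 0` for all `z` and `v ≠ 0`, then `w = 0`. -/
private lemma aux_key {n : ℕ} (v w : Esp n) (hv : v ≠ 0)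
    (h : ∀ z : Esp n, (inner ℝ v z : ℝ) • w + (inner ℝ w z : ℝ) • v = 0) :
    w = 0 := by
  have hvv : (inner ℝ v v : ℝ) ≠ 0 := inner_self_ne_zero.2 hv
  have h1 := h v
  have h2 : (inner ℝ ((inner ℝ v v : ℝ) • w + (inner ℝ w v : ℝ) • v) v : ℝ) = 0 := by
    rw [h1, inner_zero_left]
  rw [inner_add_left, real_inner_smul_left, real_inner_smul_left] at h2
  have hwv : (inner ℝ w v : ℝ) = 0 := by
    have hz : (inner ℝ w v : ℝ) * (inner ℝ v v : ℝ) = 0 := by nlinarith [h2]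
    rcases mul_eq_zero.1 hz with h' | h'
    · exact h'
    · exact absurd h' hvv
  rw [hwv, zero_smul, add_zero, smul_eq_zero] at h1
  exact h1.resolve_left hvv

/-- The combination lemma used for the injectivity step. -/
private lemma aux_cancel {n : ℕ} (a c v : Esp n) (hv : v ≠ 0)
    (h : ∀ z : Esp n,
      (inner ℝ a z : ℝ) • a - (inner ℝ (a - v) z : ℝ) • (a - v)
        = (inner ℝ c z : ℝ) • c - (inner ℝ (c - v) z : ℝ) • (c - v)) : a = c := by
  have hw : a - c = 0 := by
    refine aux_key v (a - c) hv fun z => ?_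
    have hz := h z
    simp only [inner_sub_left, sub_smul, smul_sub] at hz ⊢
    linear_combination (norm := module) hz
  exact sub_eq_zero.1 hw

/-- The symmetrized quadratic map. -/
private def symMap (n : ℕ) : (Esp n × Esp n) → (Esp n × (Esp n →L[ℝ] Esp n)) :=
  fun q => (q.1 - q.2, outerFun n (q.1, q.1) - outerFun n (q.2, q.2))

private lemma symMap_contDiff (n : ℕ) : ContDiff ℝ ((⊤ : ℕ∞) : WithTop ℕ∞) (symMap n) := by
  have hq : ContDiff ℝ ((⊤ : ℕ∞) : WithTop ℕ∞) (fun y : Esp n => outerFun n (y, y)) :=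
    isBoundedBilinearMap_outerFun.contDiff.comp (contDiff_id.prodMk contDiff_id)
  exact (contDiff_fst.sub contDiff_snd).prodMk
    ((hq.comp contDiff_fst).sub (hq.comp contDiff_snd))

private lemma symMap_swap {n : ℕ} (s t : Esp n) :
    symMap n (t, s) = - symMap n (s, t) := by
  simp [symMap, Prod.ext_iff, neg_sub]

private lemma symMap_inj {n : ℕ} {a b c d : Esp n} (hab : a - b ≠ 0)
    (h : symMap n (a, b) = symMap n (c, d)) : a = c := by
  rw [Prod.ext_iff] at h
  obtain ⟨h1, h2⟩ := h
  simp only [symMap] at h1 h2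
  have hbx : b = a - (a - b) := by abel
  have hdy : d = c - (a - b) := by rw [h1]; abel
  refine aux_cancel a c (a - b) hab fun z => ?_
  have h2z := congrFun (congrArg DFunLike.coe h2) z
  simp only [ContinuousLinearMap.coe_sub', Pi.sub_apply, outerFun_apply] at h2z
  rw [← hbx, ← hdy]
  exact h2z

/-- Derivative of `y ↦ outerFun n (y, y)` at `c`. -/
private def dQuad (n : ℕ) (c : Esp n) : Esp n →L[ℝ] (Esp n →L[ℝ] Esp n) :=
  ((isBoundedBilinearMap_outerFun (n := n)).deriv (c, c)).comp
    ((ContinuousLinearMap.id ℝ (Esp n)).prod (ContinuousLinearMap.id ℝ (Esp n)))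

private lemma quad_hasFDerivAt {n : ℕ} (c : Esp n) :
    HasFDerivAt (fun y : Esp n => outerFun n (y, y)) (dQuad n c) c := by
  have hdiag : HasFDerivAt (fun y : Esp n => (y, y))
      ((ContinuousLinearMap.id ℝ (Esp n)).prod (ContinuousLinearMap.id ℝ (Esp n))) c :=
    (hasFDerivAt_id c).prodMk (hasFDerivAt_id c)
  exact HasFDerivAt.comp (f := fun y : Esp n => (y, y)) c
    ((isBoundedBilinearMap_outerFun (n := n)).hasFDerivAt (c, c)) hdiag

/-- The derivative of `symMap` at `(a, b)`. -/
private def symDeriv (n : ℕ) (a b : Esp n) :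
    (Esp n × Esp n) →L[ℝ] (Esp n × (Esp n →L[ℝ] Esp n)) :=
  (ContinuousLinearMap.fst ℝ (Esp n) (Esp n)
      - ContinuousLinearMap.snd ℝ (Esp n) (Esp n)).prod
    ((dQuad n a).comp (ContinuousLinearMap.fst ℝ (Esp n) (Esp n))
      - (dQuad n b).comp (ContinuousLinearMap.snd ℝ (Esp n) (Esp n)))

private lemma symMap_hasFDerivAt (n : ℕ) (a b : Esp n) :
    HasFDerivAt (symMap n) (symDeriv n a b) (a, b) := by
  have h := ((hasFDerivAt_fst (𝕜 := ℝ) (p := (a, b))).sub (hasFDerivAt_snd (𝕜 := ℝ) (p := (a, b)))).prodMk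
    (((quad_hasFDerivAt a).comp (a, b) (hasFDerivAt_fst (𝕜 := ℝ) (p := (a, b)))).sub
      ((quad_hasFDerivAt b).comp (a, b) (hasFDerivAt_snd (𝕜 := ℝ) (p := (a, b)))))
  exact h

private lemma symDeriv_eq_zero {n : ℕ} {a b : Esp n} (hab : a - b ≠ 0)
    {α β : Esp n} (h : symDeriv n a b (α, β) = 0) : α = 0 := by
  have h' : ((α - β : Esp n), dQuad n a α - dQuad n b β) = 0 := by
    rw [← h]; rfl
  rw [Prod.ext_iff] at h'
  obtain ⟨h1, h2⟩ := h'
  have hαβ : α = β := sub_eq_zero.1 h1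
  rw [← hαβ] at h2
  have hda : ∀ (c γ : Esp n), dQuad n c γ
      = outerFun n (c, γ) + outerFun n (γ, c) := fun c γ =>
    (isBoundedBilinearMap_outerFun (n := n)).deriv_apply (c, c) (γ, γ)
  rw [hda, hda] at h2
  refine aux_key (a - b) α hab fun z => ?_
  have h2z := congrFun (congrArg DFunLike.coe h2) z
  simp only [ContinuousLinearMap.coe_sub', Pi.sub_apply, ContinuousLinearMap.add_apply,
    Prod.snd_zero, ContinuousLinearMap.zero_apply, outerFun_apply] at h2z
  simp only [inner_sub_left, sub_smul, smul_sub]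
  linear_combination (norm := module) h2z

end Aux

/-- Symmetric embedding: a compact smooth manifold without boundary carrying
a smooth free involution `σ` admits a smooth injective immersion `u` into some `ℝ^N` with
`u ∘ σ = −u`. -/
theorem exists_symmetric_embedding
    {E : Type*} [NormedAddCommGroup E] [NormedSpace ℝ E] [FiniteDimensional ℝ E]
    {H : Type*} [TopologicalSpace H] (I : ModelWithCorners ℝ E H) [I.Boundaryless]
    {M : Type*} [TopologicalSpace M] [ChartedSpace H M] [IsManifold I (⊤ : ℕ∞) M]
    [CompactSpace M] [Nonempty M] [T2Space M]
    (σ : M → M) (hσ_smooth : ContMDiff I I (⊤ : ℕ∞) σ)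
    (hσ_invol : σ ∘ σ = id) (hσ_free : ∀ x : M, σ x ≠ x) :
    ∃ N : ℕ, 1 ≤ N ∧ ∃ u : M → EuclideanSpace ℝ (Fin N),
      ContMDiff I (𝓘(ℝ, EuclideanSpace ℝ (Fin N))) (⊤ : ℕ∞) u
      ∧ Function.Injective u
      ∧ (∀ x : M, Function.Injective (mfderiv I (𝓘(ℝ, EuclideanSpace ℝ (Fin N))) u x))
      ∧ (∀ x : M, u (σ x) = -u x) := by
  classical
  obtain ⟨n, f, hf_smooth, hf_emb, hf_imm⟩ := exists_embedding_euclidean_of_compact (I := I)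
    (M := M)
  have hf_inj : Function.Injective f := hf_emb.injective
  -- basic facts
  have hσσ : ∀ x : M, σ (σ x) = x := fun x => congrFun hσ_invol x
  have hv_ne : ∀ x : M, f x - f (σ x) ≠ 0 := by
    intro x h
    exact hσ_free x (hf_inj (sub_eq_zero.1 h)).symm
  -- an abstract linear identification of the target with a Euclidean space
  obtain ⟨N, hN1, ⟨TE⟩⟩ : ∃ N : ℕ, 1 ≤ N ∧
      Nonempty ((Esp n × (Esp n →L[ℝ] Esp n)) ≃L[ℝ] EuclideanSpace ℝ (Fin N)) := by
    haveI : FiniteDimensional ℝ (Esp n × (Esp n →L[ℝ] Esp n)) := by infer_instance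
    refine ⟨Module.finrank ℝ (Esp n × (Esp n →L[ℝ] Esp n)), ?_, ⟨toEuclidean⟩⟩
    obtain x₀ : M := Classical.arbitrary M
    haveI : Nontrivial (Esp n) := ⟨f x₀ - f (σ x₀), 0, hv_ne x₀⟩
    exact Module.finrank_pos
  -- smoothness pieces
  have hp_smooth : ContMDiff I (𝓘(ℝ, Esp n × Esp n)) (⊤ : ℕ∞) (fun y : M => (f y, f (σ y))) :=
    hf_smooth.prodMk_space (hf_smooth.comp hσ_smooth)
  have hTEg_contDiff : ContDiff ℝ ((⊤ : ℕ∞) : WithTop ℕ∞)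
      (fun q : Esp n × Esp n => TE (symMap n q)) :=
    (TE.toContinuousLinearMap.contDiff).comp (symMap_contDiff n)
  refine ⟨N, hN1,
    (fun q : Esp n × Esp n => TE (symMap n q)) ∘ (fun y : M => (f y, f (σ y))),
    ?_, ?_, ?_, ?_⟩
  · -- smoothness
    exact hTEg_contDiff.comp_contMDiff hp_smooth
  · -- injectivity
    intro x y hxy
    have hg_eq : symMap n (f x, f (σ x)) = symMap n (f y, f (σ y)) :=
      TE.injective hxy
    exact hf_inj (symMap_inj (hv_ne x) hg_eq)
  · -- immersion
    intro x
    -- derivatives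
    have hf_md : MDifferentiableAt I (𝓘(ℝ, Esp n)) f x :=
      hf_smooth.mdifferentiableAt (by simp)
    have hfσ_md : MDifferentiableAt I (𝓘(ℝ, Esp n)) (fun y => f (σ y)) x :=
      (hf_smooth.comp hσ_smooth).mdifferentiableAt (by simp)
    have hp_md : MDifferentiableAt I (𝓘(ℝ, Esp n × Esp n))
        (fun y : M => (f y, f (σ y))) x := hf_md.prodMk_space hfσ_md
    have hmp : mfderiv I (𝓘(ℝ, Esp n × Esp n)) (fun y : M => (f y, f (σ y))) x
        = (mfderiv I (𝓘(ℝ, Esp n)) f x).prod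
            (mfderiv I (𝓘(ℝ, Esp n)) (fun y => f (σ y)) x) := by
      rw [modelWithCornersSelf_prod, ← chartedSpaceSelf_prod]
      exact hf_md.mfderiv_prod hfσ_md
    have hTEg' : HasFDerivAt (fun q : Esp n × Esp n => TE (symMap n q))
        ((TE : (Esp n × (Esp n →L[ℝ] Esp n)) →L[ℝ] EuclideanSpace ℝ (Fin N)).comp
          (symDeriv n (f x) (f (σ x)))) (f x, f (σ x)) :=
      (TE.hasFDerivAt).comp (f x, f (σ x)) (symMap_hasFDerivAt n (f x) (f (σ x)))
    have hmfd : mfderiv I (𝓘(ℝ, EuclideanSpace ℝ (Fin N)))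
        ((fun q : Esp n × Esp n => TE (symMap n q)) ∘ (fun y : M => (f y, f (σ y)))) x
        = ((TE : (Esp n × (Esp n →L[ℝ] Esp n)) →L[ℝ] EuclideanSpace ℝ (Fin N)).comp
            (symDeriv n (f x) (f (σ x)))).comp
          ((mfderiv I (𝓘(ℝ, Esp n)) f x).prod
            (mfderiv I (𝓘(ℝ, Esp n)) (fun y => f (σ y)) x)) := by
      rw [mfderiv_comp x
        ((hTEg_contDiff.differentiable (by simp)).differentiableAt.mdifferentiableAt)
        hp_md]
      beta_reduce
      rw [hmp, mfderiv_eq_fderiv, hTEg'.fderiv]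
      rfl
    rw [hmfd]
    refine (injective_iff_map_eq_zero _).2 ?_
    intro ξ hξ
    have h0 : symDeriv n (f x) (f (σ x))
        ((mfderiv I (𝓘(ℝ, Esp n)) f x) ξ,
         (mfderiv I (𝓘(ℝ, Esp n)) (fun y => f (σ y)) x) ξ) = 0 := by
      apply TE.injective
      rw [map_zero]
      exact hξ
    have hα0 : (mfderiv I (𝓘(ℝ, Esp n)) f x) ξ = 0 :=
      symDeriv_eq_zero (hv_ne x) h0
    exact hf_imm x (by rw [hα0, map_zero])
  · -- oddness
    intro x
    show TE (symMap n (f (σ x), f (σ (σ x)))) = - TE (symMap n (f x, f (σ x)))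
    rw [hσσ x, symMap_swap, map_neg]
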